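/- For every real number q with 0 < q < 1 and every natural number d ≥ 1, we have (1/d)·(1 − (1 − q^{d+1}) / ((1−q)(d+1))) < 1/(d+1). That is, in a 1-layer linear GCN with asymmetric normalization, DropEdge strictly decreases the expected sensitivity of a node's representation to each of its neighbors' input features compared to the NoDrop model. -/

import Mathlib

/-- DropEdge strictly decreases the expected cross-edge weight (sensitivity to each
neighbor's features) compared to the NoDrop model. -/
theorem dropedge_neighbor_sensitivity_decreases (q : ℝ) (hq0 : 0 < q) (hq1 : q < 1)
    (d : ℕ) (hd : 1 ≤ d) :
    (1 / (d : ℝ)) * (1 - (1 - q ^ (d + 1)) / ((1 - q) * ((d : ℝ) + 1)))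
      < 1 / ((d : ℝ) + 1) := by
  have hd' : (1:ℝ) ≤ d := by exact_mod_cast hd
  have hdpos : (0:ℝ) < d := by linarith
  have hq : (0:ℝ) < 1 - q := by linarith
  have hpow : q ^ (d + 1) < q := by
    calc q ^ (d + 1) < q ^ 1 := pow_lt_pow_right_of_lt_one₀ hq0 hq1 (by omega)
    _ = q := pow_one q
  have hS : 1 < (1 - q ^ (d + 1)) / (1 - q) := by
    rw [lt_div_iff₀ hq]; linarith
  have e : (1 - q ^ (d + 1)) / ((1 - q) * ((d:ℝ) + 1))
      = ((1 - q ^ (d + 1)) / (1 - q)) / ((d:ℝ) + 1) := by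
    rw [div_div]
  rw [e]
  set S := (1 - q ^ (d + 1)) / (1 - q) with hSdef
  have hd1 : (0:ℝ) < (d:ℝ) + 1 := by linarith
  have hne : ((d:ℝ)+1) ≠ 0 := ne_of_gt hd1
  have hne2 : (d:ℝ) ≠ 0 := ne_of_gt hdpos
  field_simp
  nlinarith [mul_pos hdpos hd1]
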